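/- The only integer solution of the equation w² = −6·x⁴ − 3·y⁴ + 2·z⁴ is w = x = y = z = 0. -/

import Mathlib

section OnlyTrivialAux

private lemma pow4_zmod16 : ∀ x : ZMod 16, x ^ 4 = 0 ∨ x ^ 4 = 1 := by decide

private lemma key16 : ∀ w x y z : ZMod 16, w ^ 2 = -6 * x ^ 4 - 3 * y ^ 4 + 2 * z ^ 4 →
    (x ^ 4 = 0 ∧ y ^ 4 = 0 ∧ z ^ 4 = 0) ∨ (x ^ 4 = 1 ∧ y ^ 4 = 1 ∧ z ^ 4 = 1) := by
  intro w x y z h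
  rcases pow4_zmod16 x with hx | hx <;> rcases pow4_zmod16 y with hy | hy <;>
    rcases pow4_zmod16 z with hz | hz <;> rw [hx, hy, hz] at h <;>
    simp only [hx, hy, hz] <;> revert h <;> revert w <;> decide

private lemma prime_three_mod_four_dvd (q : ℕ) (hq : q.Prime) (h3 : q % 4 = 3)
    (a b : ℤ) (h : (q : ℤ) ∣ a ^ 2 + b ^ 2) : (q : ℤ) ∣ a ∧ (q : ℤ) ∣ b := by
  haveI : Fact q.Prime := ⟨hq⟩
  have hsum : (a : ZMod q) ^ 2 + (b : ZMod q) ^ 2 = 0 := by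
    have := (ZMod.intCast_zmod_eq_zero_iff_dvd _ q).2 h
    push_cast at this
    exact this
  have hb : (b : ZMod q) = 0 := by
    by_contra hb
    have hsq : ((a : ZMod q) * (b : ZMod q)⁻¹) ^ 2 = -1 := by
      field_simp
      linear_combination hsum
    have : IsSquare (-1 : ZMod q) := ⟨(a : ZMod q) * (b : ZMod q)⁻¹, by rw [← pow_two, hsq]⟩
    rw [ZMod.exists_sq_eq_neg_one_iff] at this
    exact this h3
  have hbd : (q : ℤ) ∣ b := (ZMod.intCast_zmod_eq_zero_iff_dvd b q).1 hb
  refine ⟨?_, hbd⟩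
  have ha : (a : ZMod q) = 0 := by
    have : (a : ZMod q) ^ 2 = 0 := by rw [hb] at hsum; simpa using hsum
    exact pow_eq_zero_iff (by norm_num) |>.1 this
  exact (ZMod.intCast_zmod_eq_zero_iff_dvd a q).1 ha

private lemma exists_prime_three_mod_four : ∀ n : ℕ, 0 < n → n % 4 = 3 →
    ∃ q : ℕ, q.Prime ∧ q % 4 = 3 ∧ q ∣ n := by
  intro n
  induction n using Nat.strong_induction_on with
  | _ n ih =>
    intro hn h3
    obtain ⟨p, hp, hpd⟩ := Nat.exists_prime_and_dvd (by omega : n ≠ 1)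
    have hp2 : p ≠ 2 := by
      rintro rfl
      obtain ⟨k, rfl⟩ := hpd
      omega
    have hpodd : p % 2 = 1 := Nat.odd_iff.1 (hp.odd_of_ne_two hp2)
    rcases Nat.lt_or_ge (p % 4) 3 with hlt | hge
    · have hp1 : p % 4 = 1 := by omega
      obtain ⟨m, rfl⟩ := hpd
      have hm0 : 0 < m := by
        rcases Nat.eq_zero_or_pos m with rfl | h
        · simp at hn
        · exact h
      have hm3 : m % 4 = 3 := by
        have := Nat.mul_mod p m 4
        rw [hp1] at this
        omega
      have hmlt : m < p * m := by
        have := hp.two_le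
        nlinarith
      obtain ⟨q, hq, hq3, hqd⟩ := ih m hmlt hm0 hm3
      exact ⟨q, hq, hq3, hqd.mul_left p⟩
    · have : p % 4 = 3 := by omega
      exact ⟨p, hp, this, hpd⟩

private lemma not_sq_add_sq : ∀ n : ℕ, ∀ A B a b : ℤ, A.natAbs = n → 0 < A → 0 < B →
    A % 4 = 3 → B % 4 = 3 →
    (∀ q : ℕ, q.Prime → q % 4 = 3 → (q : ℤ) ∣ A → (q : ℤ) ∣ B → False) →
    A * B = a ^ 2 + b ^ 2 → False := by
  intro n
  induction n using Nat.strong_induction_on with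
  | _ n ih =>
    intro A B a b hn hA hB hA3 hB3 hcop heq
    have hAnat : (A.natAbs : ℤ) = A := Int.natAbs_of_nonneg hA.le
    have hA3' : A.natAbs % 4 = 3 := by omega
    obtain ⟨q, hq, hq3, hqA'⟩ := exists_prime_three_mod_four A.natAbs (by omega) hA3'
    have hqA : (q : ℤ) ∣ A := by
      rw [← hAnat]; exact_mod_cast Int.natCast_dvd_natCast.2 hqA'
    have hqB : ¬ (q : ℤ) ∣ B := fun hd => hcop q hq hq3 hqA hd
    have hqprime : Prime (q : ℤ) := Nat.prime_iff_prime_int.1 hq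
    obtain ⟨hqa, hqb⟩ := prime_three_mod_four_dvd q hq hq3 a b (heq ▸ Dvd.dvd.mul_right hqA B)
    obtain ⟨a', rfl⟩ := hqa
    obtain ⟨b', rfl⟩ := hqb
    obtain ⟨A₁, hA1⟩ := hqA
    have hq0 : (q : ℤ) ≠ 0 := by exact_mod_cast hq.ne_zero
    have hqA1 : (q : ℤ) ∣ A₁ := by
      have h0 : (q:ℤ) * (A₁ * B) = (q:ℤ) * ((q:ℤ) * (a'^2 + b'^2)) := by
        rw [← mul_assoc, ← hA1]; linear_combination heq
      have h1 : A₁ * B = (q:ℤ) * (a'^2 + b'^2) := mul_left_cancel₀ hq0 h0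
      rcases (hqprime.2.2 A₁ B ⟨a'^2 + b'^2, h1⟩) with h | h
      · exact h
      · exact absurd h hqB
    obtain ⟨A₂, hA2⟩ := hqA1
    have hAeq : A = (q:ℤ)^2 * A₂ := by rw [hA1, hA2]; ring
    have heq2 : A₂ * B = a' ^ 2 + b' ^ 2 := by
      have h2 : (q:ℤ)^2 * (A₂ * B) = (q:ℤ)^2 * (a'^2 + b'^2) := by
        rw [← mul_assoc, ← hAeq]; linear_combination heq
      exact mul_left_cancel₀ (pow_ne_zero 2 hq0) h2
    have hq2 : 2 ≤ q := hq.two_le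
    have hA2pos : 0 < A₂ := by
      rcases lt_trichotomy A₂ 0 with h | h | h
      · nlinarith [sq_nonneg ((q:ℤ))]
      · rw [h, mul_zero] at hAeq; omega
      · exact h
    have hA23 : A₂ % 4 = 3 := by
      have hqodd : (q:ℤ) % 2 = 1 := by
        have : q % 2 = 1 := Nat.odd_iff.1 (hq.odd_of_ne_two (by omega))
        omega
      obtain ⟨m, hm⟩ : ∃ m, (q:ℤ) = 2*m+1 := ⟨(q:ℤ)/2, by omega⟩
      have hrw : A = A₂ + 4 * ((m^2+m) * A₂) := by rw [hAeq, hm]; ring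
      rw [hrw, Int.add_mul_emod_self_left] at hA3
      omega
    have hlt : A₂.natAbs < n := by
      have h3q : (3:ℤ) ≤ (q:ℤ) := by
        have h2q : (2:ℤ) ≤ (q:ℤ) := by exact_mod_cast hq2
        rcases eq_or_lt_of_le h2q with h | h
        · exfalso
          have : q = 2 := by exact_mod_cast h.symm
          omega
        · omega
      have h9 : (9:ℤ) ≤ (q:ℤ)^2 := by nlinarith
      have : A₂ < A := by nlinarith
      omega
    exact ih A₂.natAbs hlt A₂ B a' b' rfl hA2pos hB hA23 hB3
      (fun q' hq' hq'3 hd hdB => hcop q' hq' hq'3 (hAeq ▸ hd.mul_left _) hdB) heq2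

/-- The primitive case: no solution with `gcd(x,y,z) = 1`. -/
private lemma no_primitive_solution (w x y z : ℤ)
    (h : w ^ 2 = -6 * x ^ 4 - 3 * y ^ 4 + 2 * z ^ 4)
    (hg : Int.gcd (Int.gcd x y) z = 1) : False := by
  -- Step 1: x, y, z are all odd
  have hcast : ((w : ZMod 16)) ^ 2 = -6 * (x:ZMod 16)^4 - 3*(y:ZMod 16)^4 + 2*(z:ZMod 16)^4 := by
    have := congrArg (Int.cast : ℤ → ZMod 16) h
    push_cast at this
    exact this
  have heven : ∀ t : ℤ, (t : ZMod 16) ^ 4 = 0 → (2:ℤ) ∣ t := by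
    intro t ht
    have h16 : (16:ℤ) ∣ t ^ 4 := by
      have : ((t ^ 4 : ℤ) : ZMod 16) = 0 := by push_cast; exact ht
      exact_mod_cast (ZMod.intCast_zmod_eq_zero_iff_dvd _ 16).1 this
    have h2 : (2:ℤ) ∣ t ^ 4 := dvd_trans ⟨8, rfl⟩ h16
    exact Int.prime_two.dvd_of_dvd_pow h2
  have hodd : ∀ t : ℤ, (t : ZMod 16) ^ 4 = 1 → ¬ (2:ℤ) ∣ t := by
    intro t ht h2
    obtain ⟨k, rfl⟩ := h2
    have : ((2 * k : ℤ) : ZMod 16) ^ 4 = 16 * (k:ZMod 16)^4 := by push_cast; ring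
    rw [ht] at this
    have h16 : (16 : ZMod 16) = 0 := by decide
    rw [h16, zero_mul] at this
    exact (by decide : (1 : ZMod 16) ≠ 0) this
  rcases key16 _ _ _ _ hcast with ⟨hx0, hy0, hz0⟩ | ⟨hx1, hy1, hz1⟩
  · -- all even: contradicts gcd = 1
    have hdvd : (2:ℤ) ∣ (Int.gcd (Int.gcd x y) z : ℤ) :=
      Int.dvd_coe_gcd (Int.dvd_coe_gcd (heven x hx0) (heven y hy0)) (heven z hz0)
    rw [hg] at hdvd
    norm_num at hdvd
  -- all odd
  have hx : Odd x := Int.not_even_iff_odd.1 (fun he => hodd x hx1 he.two_dvd)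
  have hy : Odd y := Int.not_even_iff_odd.1 (fun he => hodd y hy1 he.two_dvd)
  have hz : Odd z := Int.not_even_iff_odd.1 (fun he => hodd z hz1 he.two_dvd)
  -- w is odd, and v = 2x² - y² is odd
  have hw : Odd w := by
    have h2 : Odd (w ^ 2) := by
      rw [h]
      rcases hx with ⟨i, hi⟩; rcases hy with ⟨j, hj⟩; rcases hz with ⟨k, hk⟩
      refine ⟨-48*i^4 - 96*i^3 - 72*i^2 - 24*i - 24*j^4 - 48*j^3 - 36*j^2 - 12*j
        + 16*k^4 + 32*k^3 + 24*k^2 + 8*k - 4, by rw [hi, hj, hk]; ring⟩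
    rcases Int.even_or_odd w with he | ho
    · exfalso
      exact (Int.not_odd_iff_even.2 (Int.even_pow.mpr ⟨he, by norm_num⟩)) h2
    · exact ho
  have hv : Odd (2 * x ^ 2 - y ^ 2) := by
    rcases hy with ⟨j, hj⟩
    exact ⟨x^2 - 2*j^2 - 2*j - 1, by rw [hj]; ring⟩
  -- halves of w ± v
  obtain ⟨a, ha⟩ := hw.add_odd hv
  obtain ⟨b, hb⟩ := hw.sub_odd hv
  -- the key identity : (x²+y²+z²)(z²-x²-y²) = a² + b²
  set A : ℤ := x^2 + y^2 + z^2 with hAdef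
  set B : ℤ := z^2 - x^2 - y^2 with hBdef
  have hkey : A * B = a ^ 2 + b ^ 2 := by
    have h4 : (4:ℤ) * (A * B) = 4 * (a ^ 2 + b ^ 2) := by
      rw [hAdef, hBdef]
      linear_combination (-2:ℤ) * h + (w + (2*x^2-y^2) + (a+a)) * ha
        + (w - (2*x^2-y^2) + (b+b)) * hb
    exact mul_left_cancel₀ (by norm_num) h4
  -- A, B ≡ 3 (mod 4)
  obtain ⟨i, hi⟩ := hx; obtain ⟨j, hj⟩ := hy; obtain ⟨k, hk⟩ := hz
  have hA3 : A % 4 = 3 := by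
    have : A = 3 + 4 * (i^2+i+j^2+j+k^2+k) := by rw [hAdef, hi, hj, hk]; ring
    rw [this, Int.add_mul_emod_self_left]
    decide
  have hB3 : B % 4 = 3 := by
    have : B = 3 + 4 * (k^2+k-i^2-i-j^2-j-1) := by rw [hBdef, hi, hj, hk]; ring
    rw [this, Int.add_mul_emod_self_left]
    decide
  -- positivity
  have hApos : 0 < A := by
    have hx0 : x ≠ 0 := by rintro rfl; omega
    have : 0 < x ^ 2 := by positivity
    nlinarith [sq_nonneg y, sq_nonneg z]
  have hBpos : 0 < B := by
    rcases lt_trichotomy B 0 with hB | hB | hB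
    · nlinarith [sq_nonneg a, sq_nonneg b]
    · omega
    · exact hB
  -- no common prime ≡ 3 mod 4
  have hcop : ∀ q : ℕ, q.Prime → q % 4 = 3 → (q : ℤ) ∣ A → (q : ℤ) ∣ B → False := by
    intro q hq hq3 hdA hdB
    have hqprime : Prime (q : ℤ) := Nat.prime_iff_prime_int.1 hq
    have hq2 : ¬ (q:ℤ) ∣ 2 := by
      intro h2
      have hqd : q ∣ 2 := by exact_mod_cast Int.natCast_dvd_natCast.1 (by exact_mod_cast h2)
      have hle := Nat.le_of_dvd (by norm_num) hqd
      have := hq.two_le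
      omega
    -- q ∣ z
    have hqz : (q:ℤ) ∣ z := by
      have hsum : (q:ℤ) ∣ 2 * z^2 := by
        have := dvd_add hdA hdB
        have heq' : A + B = 2 * z^2 := by rw [hAdef, hBdef]; ring
        rwa [heq'] at this
      rcases hqprime.2.2 2 (z^2) hsum with h | h
      · exact absurd h hq2
      · exact hqprime.dvd_of_dvd_pow h
    -- q ∣ x, q ∣ y
    have hqxy : (q:ℤ) ∣ x ^ 2 + y ^ 2 := by
      have hdiff : (q:ℤ) ∣ 2 * (x^2 + y^2) := by
        have := dvd_sub hdA hdB
        have heq' : A - B = 2 * (x^2 + y^2) := by rw [hAdef, hBdef]; ring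
        rwa [heq'] at this
      rcases hqprime.2.2 2 (x^2+y^2) hdiff with h | h
      · exact absurd h hq2
      · exact h
    obtain ⟨hqx, hqy⟩ := prime_three_mod_four_dvd q hq hq3 x y hqxy
    have : (q:ℤ) ∣ (Int.gcd (Int.gcd x y) z : ℤ) := Int.dvd_coe_gcd (Int.dvd_coe_gcd hqx hqy) hqz
    rw [hg] at this
    have hq1 : (q:ℤ) ≤ 1 := Int.le_of_dvd one_pos this
    have := hq.two_le
    omega
  exact not_sq_add_sq A.natAbs A B a b rfl hApos hBpos hA3 hB3 hcop hkey

end OnlyTrivialAux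

/-- The only integer solution of `w² = −6x⁴ − 3y⁴ + 2z⁴` is `w = x = y = z = 0`. -/
theorem only_trivial_solution_minus6_minus3_2 (w x y z : ℤ)
    (h : w ^ 2 = -6 * x ^ 4 - 3 * y ^ 4 + 2 * z ^ 4) :
    w = 0 ∧ x = 0 ∧ y = 0 ∧ z = 0 := by
  by_cases hxyz : x = 0 ∧ y = 0 ∧ z = 0
  · obtain ⟨rfl, rfl, rfl⟩ := hxyz
    have hw : w ^ 2 = 0 := by rw [h]; ring
    exact ⟨pow_eq_zero_iff (by norm_num) |>.1 hw, rfl, rfl, rfl⟩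
  · exfalso
    set d : ℕ := Int.gcd (Int.gcd x y) z with hd
    have hd0 : d ≠ 0 := by
      intro h0
      rw [hd, Int.gcd_eq_zero_iff] at h0
      obtain ⟨hgxy, hz0⟩ := h0
      have : Int.gcd x y = 0 := by exact_mod_cast hgxy
      rw [Int.gcd_eq_zero_iff] at this
      exact hxyz ⟨this.1, this.2, hz0⟩
    have hdx : (d:ℤ) ∣ x := dvd_trans (Int.gcd_dvd_left _ _) (Int.gcd_dvd_left _ _)
    have hdy : (d:ℤ) ∣ y := dvd_trans (Int.gcd_dvd_left _ _) (Int.gcd_dvd_right _ _)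
    have hdz : (d:ℤ) ∣ z := Int.gcd_dvd_right _ _
    obtain ⟨x₁, hx1⟩ := hdx
    obtain ⟨y₁, hy1⟩ := hdy
    obtain ⟨z₁, hz1⟩ := hdz
    have hdne : ((d:ℤ)) ≠ 0 := by exact_mod_cast hd0
    -- d² ∣ w
    have hw2 : w ^ 2 = ((d:ℤ)^2)^2 * (-6 * x₁^4 - 3*y₁^4 + 2*z₁^4) := by
      rw [h, hx1, hy1, hz1]; ring
    have hdw : (d:ℤ)^2 ∣ w := by
      have : ((d:ℤ)^2)^2 ∣ w^2 := ⟨_, hw2⟩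
      exact (Int.pow_dvd_pow_iff (two_ne_zero)).1 this
    obtain ⟨w₁, hw1⟩ := hdw
    have heq1 : w₁ ^ 2 = -6 * x₁^4 - 3*y₁^4 + 2*z₁^4 := by
      have h4 : ((d:ℤ)^2)^2 * (w₁^2) = ((d:ℤ)^2)^2 * (-6 * x₁^4 - 3*y₁^4 + 2*z₁^4) := by
        rw [← hw2, hw1]; ring
      exact mul_left_cancel₀ (pow_ne_zero 2 (pow_ne_zero 2 hdne)) h4
    -- gcd of the reduced triple is 1
    have hg1 : Int.gcd (Int.gcd x₁ y₁) z₁ = 1 := by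
      have hgxy : Int.gcd x y = d * Int.gcd x₁ y₁ := by
        rw [hx1, hy1, Int.gcd_mul_left]
        simp
      have houter : d = d * Int.gcd (Int.gcd x₁ y₁) z₁ := by
        conv_lhs => rw [hd]
        rw [hgxy, hz1]
        push_cast
        rw [Int.gcd_mul_left]
        simp
      have : d * 1 = d * Int.gcd (Int.gcd x₁ y₁) z₁ := by rw [mul_one]; exact houter
      exact (Nat.eq_of_mul_eq_mul_left (Nat.pos_of_ne_zero hd0) this).symm
    exact no_primitive_solution w₁ x₁ y₁ z₁ heq1 hg1
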